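/- Generalized Hölder inequality in variable exponent Lebesgue spaces: let (Ω, μ) be a measure space and let q : Ω → ℝ be measurable with 1 < q⁻ := ess inf q ≤ q⁺ := ess sup q < ∞, and let q'(x) := q(x)/(q(x)−1) be the pointwise conjugate exponent. Then for all measurable f, g : Ω → ℝ one has ∫_Ω |f(x) g(x)| dμ(x) ≤ 2 ‖f‖_{q(·)} ‖g‖_{q'(·)}. -/

import Mathlib

open MeasureTheory Filter
open scoped ENNReal

/-- The variable-exponent semimodular `A_q(f) = ∫_Ω |f(x)|^{q(x)} dμ(x)`. -/
noncomputable def semimodular {Ω : Type*} [MeasurableSpace Ω] (μ : Measure Ω)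
    (q : Ω → ℝ) (f : Ω → ℝ) : ℝ≥0∞ :=
  ∫⁻ x, ENNReal.ofReal |f x| ^ q x ∂μ

/-- The Luxemburg norm `‖f‖_{q(·)} = inf { λ > 0 : A_q(f/λ) ≤ 1 }`, with `inf ∅ = ∞`. -/
noncomputable def luxNorm {Ω : Type*} [MeasurableSpace Ω] (μ : Measure Ω)
    (q : Ω → ℝ) (f : Ω → ℝ) : ℝ≥0∞ :=
  sInf ((fun lam : ℝ => ENNReal.ofReal lam) ''
    {lam : ℝ | 0 < lam ∧ semimodular μ q (fun x => f x / lam) ≤ 1})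

/-- If the Luxemburg norm vanishes and the exponent is a.e. at least 1, the function is a.e. 0. -/
lemma ae_zero_of_luxNorm_zero {Ω : Type*} [MeasurableSpace Ω] {μ : Measure Ω}
    {p : Ω → ℝ} {g : Ω → ℝ} (hg : Measurable g)
    (hp : ∀ᵐ x ∂μ, 1 ≤ p x) (h : luxNorm μ p g = 0) : g =ᵐ[μ] 0 := by
  by_contra hne
  have hpos : μ {x | g x ≠ 0} ≠ 0 := by
    intro h0
    exact hne (by simpa [ae_iff, Filter.EventuallyEq] using h0)
  obtain ⟨n, hn⟩ : ∃ n : ℕ, μ {x | 1 / (n + 1 : ℝ) ≤ |g x|} ≠ 0 := by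
    by_contra hall
    push_neg at hall
    apply hpos
    refine measure_mono_null ?_ (measure_iUnion_null hall)
    intro x hx
    have hgx : 0 < |g x| := abs_pos.2 hx
    obtain ⟨n, hn⟩ := exists_nat_gt (1 / |g x|)
    refine Set.mem_iUnion.2 ⟨n, ?_⟩
    have hn0 : (0:ℝ) < n + 1 := by positivity
    have : 1 / ((n:ℝ) + 1) ≤ |g x| := by
      rw [div_le_iff₀ hn0]
      have h2 : 1 / |g x| ≤ (n:ℝ) + 1 := le_of_lt (hn.trans (lt_add_one _))
      calc (1:ℝ) = |g x| * (1 / |g x|) := by field_simp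
        _ ≤ |g x| * ((n:ℝ) + 1) := mul_le_mul_of_nonneg_left h2 hgx.le
    exact this
  set δ : ℝ := 1 / (n + 1 : ℝ) with hδdef
  have hδpos : 0 < δ := by positivity
  set E : Set Ω := {x | δ ≤ |g x|} with hEdef
  have hE : MeasurableSet E := measurableSet_le measurable_const hg.abs
  have hEpos : 0 < μ E := pos_iff_ne_zero.2 hn
  set c : ℝ≥0∞ := min (μ E) 1 with hcdef
  have hc0 : c ≠ 0 := by
    simp only [hcdef, ne_eq, min_eq_iff]
    intro hc
    rcases hc with ⟨h1', _⟩ | ⟨h1', _⟩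
    · exact hEpos.ne' h1'
    · exact one_ne_zero h1'
  have hctop : c ≠ ∞ := by
    have : c ≤ 1 := min_le_right _ _
    exact (this.trans_lt ENNReal.one_lt_top).ne
  set t : ℝ := c.toReal with htdef
  have ht : 0 < t := ENNReal.toReal_pos hc0 hctop
  have hct : ENNReal.ofReal t ≤ μ E := by
    rw [ENNReal.ofReal_toReal hctop]
    exact min_le_left _ _
  -- pick lam
  set ε : ℝ := min δ (δ * t / 2) with hεdef
  have hεpos : 0 < ε := lt_min hδpos (by positivity)
  have hlt : luxNorm μ p g < ENNReal.ofReal ε := by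
    rw [h]; exact ENNReal.ofReal_pos.2 hεpos
  rw [luxNorm] at hlt
  obtain ⟨_, ⟨lam, ⟨hlam_pos, hlam_mod⟩, rfl⟩, hltlam⟩ := sInf_lt_iff.1 hlt
  have hlamε : lam < ε := by
    rwa [ENNReal.ofReal_lt_ofReal_iff hεpos] at hltlam
  have hlamδ : lam < δ := hlamε.trans_le (min_le_left _ _)
  have hlam2 : lam < δ * t / 2 := hlamε.trans_le (min_le_right _ _)
  -- lower bound on the modular
  have hlow : ENNReal.ofReal (δ / lam) * μ E ≤ semimodular μ p (fun x => g x / lam) := by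
    rw [semimodular, ← lintegral_indicator_const hE]
    refine lintegral_mono_ae ?_
    filter_upwards [hp] with x hx
    by_cases hxE : x ∈ E
    · rw [Set.indicator_of_mem hxE]
      have hgx : δ ≤ |g x| := hxE
      have hbase : (1:ℝ≥0∞) ≤ ENNReal.ofReal (δ / lam) := by
        rw [show (1:ℝ≥0∞) = ENNReal.ofReal 1 by simp]
        exact ENNReal.ofReal_le_ofReal ((one_le_div hlam_pos).2 hlamδ.le)
      calc ENNReal.ofReal (δ / lam) = ENNReal.ofReal (δ / lam) ^ (1:ℝ) := by
            rw [ENNReal.rpow_one]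
        _ ≤ ENNReal.ofReal (δ / lam) ^ p x :=
            ENNReal.rpow_le_rpow_of_exponent_le hbase hx
        _ ≤ ENNReal.ofReal |g x / lam| ^ p x := by
            refine ENNReal.rpow_le_rpow (ENNReal.ofReal_le_ofReal ?_) (le_trans zero_le_one hx)
            rw [abs_div, abs_of_pos hlam_pos]
            gcongr
    · rw [Set.indicator_of_notMem hxE]
      exact zero_le
  -- contradiction
  have hbig : (1:ℝ≥0∞) < ENNReal.ofReal (δ / lam) * μ E := by
    have h2t : 2 / t ≤ δ / lam := by
      rw [div_le_div_iff₀ (by positivity) hlam_pos]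
      nlinarith [hlam2, ht, hδpos, hlam_pos]
    calc (1:ℝ≥0∞) < 2 := ENNReal.one_lt_two
      _ = ENNReal.ofReal (2 / t) * ENNReal.ofReal t := by
          rw [← ENNReal.ofReal_mul (by positivity)]
          rw [div_mul_cancel₀ _ ht.ne']
          simp
      _ ≤ ENNReal.ofReal (δ / lam) * μ E :=
          mul_le_mul' (ENNReal.ofReal_le_ofReal h2t) hct
  exact absurd (hlow.trans hlam_mod) (not_le.2 hbig)

lemma holder_key {Ω : Type*} [MeasurableSpace Ω] {μ : Measure Ω}
    {q : Ω → ℝ} (hq : Measurable q) (hq1 : ∀ᵐ x ∂μ, 1 < q x)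
    {f g : Ω → ℝ} (hf : Measurable f) (hg : Measurable g)
    {a b : ℝ} (ha : 0 < a) (hb : 0 < b)
    (hA : semimodular μ q (fun x => f x / a) ≤ 1)
    (hB : semimodular μ (fun x => q x / (q x - 1)) (fun x => g x / b) ≤ 1) :
    ∫⁻ x, ENNReal.ofReal |f x * g x| ∂μ ≤ 2 * ENNReal.ofReal a * ENNReal.ofReal b := by
  set q' : Ω → ℝ := fun x => q x / (q x - 1) with hq'def
  have hmeas1 : Measurable fun x => ENNReal.ofReal |f x / a| ^ q x :=
    ((hf.div_const a).abs.ennreal_ofReal).pow hq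
  have hptwise : ∀ᵐ x ∂μ, ENNReal.ofReal |f x * g x| ≤
      ENNReal.ofReal a * ENNReal.ofReal b *
        (ENNReal.ofReal |f x / a| ^ q x + ENNReal.ofReal |g x / b| ^ q' x) := by
    filter_upwards [hq1] with x hx
    have hconj : (q x).HolderConjugate (q' x) := Real.HolderConjugate.conjExponent hx
    have hyoung : ENNReal.ofReal |f x / a| * ENNReal.ofReal |g x / b| ≤
        ENNReal.ofReal |f x / a| ^ q x + ENNReal.ofReal |g x / b| ^ q' x := by
      refine (ENNReal.young_inequality _ _ hconj).trans ?_
      have h1 : (1:ℝ≥0∞) ≤ ENNReal.ofReal (q x) := by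
        rw [show (1:ℝ≥0∞) = ENNReal.ofReal 1 by simp]
        exact ENNReal.ofReal_le_ofReal hx.le
      have h2 : (1:ℝ≥0∞) ≤ ENNReal.ofReal (q' x) := by
        rw [show (1:ℝ≥0∞) = ENNReal.ofReal 1 by simp]
        exact ENNReal.ofReal_le_ofReal hconj.symm.lt.le
      gcongr
      · calc ENNReal.ofReal |f x / a| ^ q x / ENNReal.ofReal (q x)
            ≤ ENNReal.ofReal |f x / a| ^ q x / 1 := ENNReal.div_le_div_left h1 _
          _ = _ := by rw [div_one]
      · calc ENNReal.ofReal |g x / b| ^ q' x / ENNReal.ofReal (q' x)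
            ≤ ENNReal.ofReal |g x / b| ^ q' x / 1 := ENNReal.div_le_div_left h2 _
          _ = _ := by rw [div_one]
    have habs : |f x * g x| = a * b * (|f x / a| * |g x / b|) := by
      rw [abs_mul, abs_div, abs_div, abs_of_pos ha, abs_of_pos hb]
      field_simp
    rw [habs, ENNReal.ofReal_mul (by positivity), ENNReal.ofReal_mul (by positivity),
      ENNReal.ofReal_mul (abs_nonneg _)]
    exact mul_le_mul_right hyoung _
  calc ∫⁻ x, ENNReal.ofReal |f x * g x| ∂μ
      ≤ ∫⁻ x, ENNReal.ofReal a * ENNReal.ofReal b *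
          (ENNReal.ofReal |f x / a| ^ q x + ENNReal.ofReal |g x / b| ^ q' x) ∂μ :=
        lintegral_mono_ae hptwise
    _ = ENNReal.ofReal a * ENNReal.ofReal b *
          ∫⁻ x, (ENNReal.ofReal |f x / a| ^ q x + ENNReal.ofReal |g x / b| ^ q' x) ∂μ :=
        lintegral_const_mul' _ _ (ENNReal.mul_ne_top ENNReal.ofReal_ne_top ENNReal.ofReal_ne_top)
    _ = ENNReal.ofReal a * ENNReal.ofReal b *
          (semimodular μ q (fun x => f x / a) + semimodular μ q' (fun x => g x / b)) := by
        rw [lintegral_add_left hmeas1]; rfl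
    _ ≤ ENNReal.ofReal a * ENNReal.ofReal b * (1 + 1) := by
        exact mul_le_mul_right (add_le_add hA hB) _
    _ = 2 * ENNReal.ofReal a * ENNReal.ofReal b := by ring

/-- Generalized Hölder inequality in variable exponent Lebesgue spaces:
if `1 < q⁻ = essInf q ≤ q⁺ = essSup q < ∞` and `q'(x) = q(x)/(q(x)-1)` is the pointwise
conjugate exponent, then `∫ |f g| dμ ≤ 2 ‖f‖_{q(·)} ‖g‖_{q'(·)}`. -/
theorem generalized_holder_inequality
    {Ω : Type*} [MeasurableSpace Ω] (μ : Measure Ω)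
    (q : Ω → ℝ) (hq : Measurable q)
    (hbdd : IsBoundedUnder (· ≤ ·) (ae μ) q)
    (h1 : 1 < essInf q μ) (h12 : essInf q μ ≤ essSup q μ)
    (f g : Ω → ℝ) (hf : Measurable f) (hg : Measurable g) :
    ∫⁻ x, ENNReal.ofReal |f x * g x| ∂μ ≤
      2 * luxNorm μ q f * luxNorm μ (fun x => q x / (q x - 1)) g := by
  by_cases hμ : μ = 0
  · subst hμ; simp
  haveI : NeBot (ae μ) := ae_neBot.2 hμ
  have hblw : IsBoundedUnder (· ≥ ·) (ae μ) q := by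
    by_contra hn
    have hS : {a : ℝ | ∀ᶠ x in ae μ, a ≤ q x} = ∅ := by
      ext a
      simp only [Set.mem_setOf_eq, Set.mem_empty_iff_false, iff_false]
      intro ha
      exact hn ⟨a, eventually_map.2 ha⟩
    have h0 : essInf q μ = 0 := by
      rw [essInf, liminf_eq, hS, Real.sSup_empty]
    rw [h0] at h1
    linarith
  have hq1 : ∀ᵐ x ∂μ, 1 < q x := eventually_lt_of_lt_liminf h1 hblw
  set q' : Ω → ℝ := fun x => q x / (q x - 1) with hq'def
  have hq'1 : ∀ᵐ x ∂μ, 1 ≤ q' x := by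
    filter_upwards [hq1] with x hx
    exact (Real.HolderConjugate.conjExponent hx).symm.lt.le
  set u : ℝ≥0∞ := luxNorm μ q f with hu
  set v : ℝ≥0∞ := luxNorm μ q' g with hv
  set L : ℝ≥0∞ := ∫⁻ x, ENNReal.ofReal |f x * g x| ∂μ with hL
  -- zero cases
  by_cases hu0 : u = 0
  · have hf0 : f =ᵐ[μ] 0 := ae_zero_of_luxNorm_zero hf
      (hq1.mono fun x hx => hx.le) hu0
    have : L = 0 := by
      rw [hL, lintegral_eq_zero_iff (by exact (hf.mul hg).abs.ennreal_ofReal)]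
      filter_upwards [hf0] with x hx
      simp [hx]
    simp [this]
  by_cases hv0 : v = 0
  · have hg0 : g =ᵐ[μ] 0 := ae_zero_of_luxNorm_zero hg hq'1 hv0
    have : L = 0 := by
      rw [hL, lintegral_eq_zero_iff (by exact (hf.mul hg).abs.ennreal_ofReal)]
      filter_upwards [hg0] with x hx
      simp [hx]
    simp [this]
  by_cases hutop : u = ∞
  · have : 2 * u * v = ∞ := by
      rw [hutop]
      rw [ENNReal.mul_top (by simp), ENNReal.top_mul hv0]
    rw [this]; exact le_top
  by_cases hvtop : v = ∞
  · have : 2 * u * v = ∞ := by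
      rw [hvtop, ENNReal.mul_top (by simp [hu0])]
    rw [this]; exact le_top
  -- main case
  have key : ∀ a ∈ {lam : ℝ | 0 < lam ∧ semimodular μ q (fun x => f x / lam) ≤ 1},
      ∀ b ∈ {lam : ℝ | 0 < lam ∧ semimodular μ q' (fun x => g x / lam) ≤ 1},
      L ≤ 2 * ENNReal.ofReal a * ENNReal.ofReal b := fun a ha b hb =>
    holder_key hq hq1 hf hg ha.1 hb.1 ha.2 hb.2
  have step1 : ∀ b ∈ {lam : ℝ | 0 < lam ∧ semimodular μ q' (fun x => g x / lam) ≤ 1},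
      L ≤ 2 * u * ENNReal.ofReal b := by
    intro b hb
    have hub : L / (2 * ENNReal.ofReal b) ≤ u := by
      rw [hu, luxNorm]
      refine le_sInf ?_
      rintro _ ⟨a, ha, rfl⟩
      rw [ENNReal.div_le_iff (by simp [hb.1])
        (ENNReal.mul_ne_top (by simp) ENNReal.ofReal_ne_top)]
      calc L ≤ 2 * ENNReal.ofReal a * ENNReal.ofReal b := key a ha b hb
        _ = ENNReal.ofReal a * (2 * ENNReal.ofReal b) := by ring
    rw [ENNReal.div_le_iff (by simp [hb.1])
      (ENNReal.mul_ne_top (by simp) ENNReal.ofReal_ne_top)] at hub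
    calc L ≤ u * (2 * ENNReal.ofReal b) := hub
      _ = 2 * u * ENNReal.ofReal b := by ring
  have step2 : L / (2 * u) ≤ v := by
    rw [hv, luxNorm]
    refine le_sInf ?_
    rintro _ ⟨b, hb, rfl⟩
    rw [ENNReal.div_le_iff (by simp [hu0]) (ENNReal.mul_ne_top (by simp) hutop)]
    calc L ≤ 2 * u * ENNReal.ofReal b := step1 b hb
      _ = ENNReal.ofReal b * (2 * u) := by ring
  rw [ENNReal.div_le_iff (by simp [hu0]) (ENNReal.mul_ne_top (by simp) hutop)] at step2
  calc L ≤ v * (2 * u) := step2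
    _ = 2 * u * v := by ring
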